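/- For n ≥ 3, let L_n be the language accepted by the DFA over {a,b} with states {0,…,n−1}, initial state 0, final state n−1, a acting as the cycle (1,…,n−1) (fixing 0), and b acting as the transposition (0,1). Then the state complexity of L_n* is exactly 2^{n−1} + 2^{n−2}. -/

import Mathlib

open scoped Computability

namespace SCW

variable {m : ℕ}

/-- the last state `n-1` -/
def lst (m : ℕ) : Fin (m+3) := ⟨m+2, by omega⟩

/-- valid subset states of the star DFA -/
def Valid (S : Finset (Fin (m+3))) : Prop := S.Nonempty ∧ (lst m ∈ S → (0 : Fin (m+3)) ∈ S)

instance : DecidablePred (Valid (m := m)) := fun _ => by unfold Valid; infer_instance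

/-- cyclic shift: fixes 0, rotates `1,…,m+2` by `j` -/
def shf (j : ℕ) (q : Fin (m+3)) : Fin (m+3) :=
  if q.val = 0 then 0 else ⟨(q.val - 1 + j) % (m+2) + 1, by
    have := Nat.mod_lt (q.val - 1 + j) (y := m+2) (by omega); omega⟩

@[simp] lemma shf_zero_val (j : ℕ) : (shf j (0 : Fin (m+3))).val = 0 := by
  simp [shf]

lemma val_zero : ((0 : Fin (m+3)).val) = 0 := rfl

lemma shf_val_ne (j : ℕ) {q : Fin (m+3)} (h : q.val ≠ 0) :
    (shf j q).val = (q.val - 1 + j) % (m+2) + 1 := by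
  simp [shf, h]

lemma shf_ne_zero (j : ℕ) {q : Fin (m+3)} (h : q.val ≠ 0) : (shf j q).val ≠ 0 := by
  rw [shf_val_ne j h]; omega

lemma shf_zero' (q : Fin (m+3)) : shf 0 q = q := by
  rcases eq_or_ne q.val 0 with h | h
  · apply Fin.ext; rw [show q = 0 from Fin.ext h]; simp
  · apply Fin.ext
    rw [shf_val_ne 0 h, Nat.add_zero, Nat.mod_eq_of_lt (by omega)]
    omega

lemma shf_shf (j k : ℕ) (q : Fin (m+3)) : shf j (shf k q) = shf (k + j) q := by
  rcases eq_or_ne q.val 0 with h | h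
  · apply Fin.ext
    rw [show q = 0 from Fin.ext h]
    simp [shf]
  · apply Fin.ext
    rw [shf_val_ne j (shf_ne_zero k h), shf_val_ne k h, shf_val_ne (k+j) h]
    simp only [Nat.add_sub_cancel]
    rw [Nat.mod_add_mod, Nat.add_assoc]

lemma shf_mod (j : ℕ) (q : Fin (m+3)) : shf j q = shf (j % (m+2)) q := by
  rcases eq_or_ne q.val 0 with h | h
  · rw [show q = 0 from Fin.ext h]; apply Fin.ext; simp
  · apply Fin.ext
    rw [shf_val_ne j h, shf_val_ne _ h, Nat.add_mod_mod]

lemma shf_period (q : Fin (m+3)) : shf (m+2) q = q := by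
  rw [shf_mod, Nat.mod_self, shf_zero']

lemma shf_mul_period (k : ℕ) (q : Fin (m+3)) : shf ((m+2) * k) q = q := by
  rw [shf_mod, Nat.mul_mod_right, shf_zero']

lemma shf_left_inv (j : ℕ) (q : Fin (m+3)) : shf (m+2 - j % (m+2)) (shf j q) = q := by
  rw [shf_shf]
  have h1 := Nat.mod_add_div j (m+2)
  have h2 : j % (m+2) < m+2 := Nat.mod_lt _ (by omega)
  have : j + (m + 2 - j % (m+2)) = (m+2) * (j / (m+2) + 1) := by
    rw [Nat.mul_add, Nat.mul_one]; omega
  rw [this, shf_mul_period]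

lemma shf_injective (j : ℕ) : Function.Injective (shf (m := m) j) := by
  intro q q' h
  have := congrArg (shf (m+2 - j % (m+2))) h
  rwa [shf_left_inv, shf_left_inv] at this


section M

variable (M : DFA (Fin 2) (Fin (m+3)))

/-- one step of the subset construction for the star automaton -/
def stepSet (S : Finset (Fin (m+3))) (c : Fin 2) : Finset (Fin (m+3)) :=
  if lst m ∈ S.image (fun q => M.step q c) then insert 0 (S.image (fun q => M.step q c))
  else S.image (fun q => M.step q c)

/-- iterated subset evaluation -/
def setEval (S : Finset (Fin (m+3))) (w : List (Fin 2)) : Finset (Fin (m+3)) :=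
  w.foldl (stepSet M) S

@[simp] lemma setEval_nil (S : Finset (Fin (m+3))) : setEval M S [] = S := rfl

lemma setEval_cons (S : Finset (Fin (m+3))) (c : Fin 2) (w : List (Fin 2)) :
    setEval M S (c :: w) = setEval M (stepSet M S c) w := rfl

lemma setEval_append (S : Finset (Fin (m+3))) (u v : List (Fin 2)) :
    setEval M S (u ++ v) = setEval M (setEval M S u) v := by
  unfold setEval; rw [List.foldl_append]

lemma mem_stepSet_iff {S : Finset (Fin (m+3))} {c : Fin 2} {q : Fin (m+3)} :
    q ∈ stepSet M S c ↔
      (∃ p ∈ S, M.step p c = q) ∨ (q = 0 ∧ ∃ p ∈ S, M.step p c = lst m) := by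
  unfold stepSet
  split
  next h =>
    simp only [Finset.mem_insert, Finset.mem_image] at h ⊢
    constructor
    · rintro (rfl | hq)
      · exact Or.inr ⟨rfl, h⟩
      · exact Or.inl hq
    · rintro (hq | ⟨rfl, _⟩)
      · exact Or.inr hq
      · exact Or.inl rfl
  next h =>
    simp only [Finset.mem_image] at h ⊢
    constructor
    · intro hq; exact Or.inl hq
    · rintro (hq | ⟨rfl, hq⟩)
      · exact hq
      · exact absurd hq h

lemma image_subset_stepSet (S : Finset (Fin (m+3))) (c : Fin 2) :
    S.image (fun q => M.step q c) ⊆ stepSet M S c := by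
  unfold stepSet
  split
  · exact Finset.subset_insert _ _
  · exact subset_rfl

lemma valid_stepSet {S : Finset (Fin (m+3))} (hS : S.Nonempty) (c : Fin 2) :
    Valid (stepSet M S c) := by
  constructor
  · exact hS.image _ |>.mono (image_subset_stepSet M S c)
  · intro hlst
    unfold stepSet at hlst ⊢
    split
    · exact Finset.mem_insert_self _ _
    next h =>
      split at hlst
      next h2 => exact absurd h2 h
      next => exact absurd hlst h

lemma valid_setEval {S : Finset (Fin (m+3))} (hS : S.Nonempty) (w : List (Fin 2)) (hw : w ≠ []) :
    Valid (setEval M S w) := by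
  induction w generalizing S with
  | nil => exact absurd rfl hw
  | cons c w ih =>
    rcases eq_or_ne w [] with rfl | hw'
    · exact valid_stepSet M hS c
    · rw [setEval_cons]
      exact ih (valid_stepSet M hS c).1 hw'

end M

/-- hypothesis on letter a -/
def HA (M : DFA (Fin 2) (Fin (m+3))) : Prop := ∀ q : Fin (m+3),
      (M.step q 0).val = if q.val = 0 then 0 else if q.val = m+3-1 then 1 else q.val + 1

/-- hypothesis on letter b -/
def HB (M : DFA (Fin 2) (Fin (m+3))) : Prop := ∀ q : Fin (m+3),
      (M.step q 1).val = if q.val = 0 then 1 else if q.val = 1 then 0 else q.val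

section M2

variable (M : DFA (Fin 2) (Fin (m+3)))

lemma step_a (ha : HA M) (q : Fin (m+3)) : M.step q 0 = shf 1 q := by
  apply Fin.ext
  have h := ha q
  rcases eq_or_ne q.val 0 with h0 | h0
  · rw [h, if_pos h0]
    simp [shf, h0]
  · rw [shf_val_ne 1 h0, h, if_neg h0]
    rcases eq_or_ne q.val (m+2) with h2 | h2
    · rw [if_pos (by omega : q.val = m+3-1)]
      have h3 : q.val - 1 + 1 = m + 2 := by omega
      rw [h3, Nat.mod_self]
    · rw [if_neg (by omega : ¬ q.val = m+3-1)]
      have hlt : q.val - 1 + 1 < m+2 := by have := q.isLt; omega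
      rw [Nat.mod_eq_of_lt hlt]
      omega

lemma image_step_a (ha : HA M) (S : Finset (Fin (m+3))) :
    S.image (fun q => M.step q 0) = S.image (shf 1) := by
  apply Finset.image_congr
  intro q _
  exact step_a M ha q

lemma step_b0 (hb : HB M) : M.step 0 1 = 1 := by
  apply Fin.ext
  rw [hb 0]
  simp

lemma step_b1 (hb : HB M) : M.step 1 1 = 0 := by
  apply Fin.ext
  rw [hb 1]
  simp

lemma step_bhi (hb : HB M) {q : Fin (m+3)} (h : 2 ≤ q.val) : M.step q 1 = q := by
  apply Fin.ext
  rw [hb q]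
  have h1 : ¬ (q.val = 0) := by omega
  have h2 : ¬ (q.val = 1) := by omega
  simp [h1, h2]

/-- the letter `a` word -/
def aw (j : ℕ) : List (Fin 2) := List.replicate j 0

lemma stepSet_a_of_zero_mem (ha : HA M) {S : Finset (Fin (m+3))} (h0 : (0 : Fin (m+3)) ∈ S) :
    stepSet M S 0 = S.image (shf 1) := by
  unfold stepSet
  rw [image_step_a M ha]
  have h0' : (0 : Fin (m+3)) ∈ S.image (shf 1) := by
    refine Finset.mem_image.2 ⟨0, h0, ?_⟩
    apply Fin.ext; simp
  split
  · rw [Finset.insert_eq_self.2 h0']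
  · rfl

lemma image_shf_image_shf (S : Finset (Fin (m+3))) (j k : ℕ) :
    (S.image (shf j)).image (shf k) = S.image (shf (j + k)) := by
  rw [Finset.image_image]
  apply Finset.image_congr
  intro q _
  exact shf_shf k j q

lemma setEval_aw_of_zero_mem (ha : HA M) {S : Finset (Fin (m+3))} (h0 : (0 : Fin (m+3)) ∈ S) (j : ℕ) :
    setEval M S (aw j) = S.image (shf j) := by
  induction j generalizing S with
  | zero =>
    simp only [aw, List.replicate, setEval_nil]
    rw [show (shf (m := m) 0) = id from funext (shf_zero'), Finset.image_id]
  | succ j ih =>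
    have : aw (j+1) = (0 : Fin 2) :: aw j := rfl
    rw [this, setEval_cons, stepSet_a_of_zero_mem M ha h0]
    have h0' : (0 : Fin (m+3)) ∈ S.image (shf 1) := by
      refine Finset.mem_image.2 ⟨0, h0, ?_⟩
      apply Fin.ext; simp
    rw [ih h0', image_shf_image_shf, Nat.add_comm 1 j]

lemma setEval_aw_small (ha : HA M) {j : ℕ} {S : Finset (Fin (m+3))}
    (h : ∀ q ∈ S, q.val ≠ 0 ∧ q.val + j ≤ m+1) :
    setEval M S (aw j) = S.image (shf j) := by
  induction j generalizing S with
  | zero =>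
    simp only [aw, List.replicate, setEval_nil]
    rw [show (shf (m := m) 0) = id from funext (shf_zero'), Finset.image_id]
  | succ j ih =>
    have hstep : stepSet M S 0 = S.image (shf 1) := by
      unfold stepSet
      rw [image_step_a M ha]
      have : lst m ∉ S.image (shf 1) := by
        intro hmem
        rcases Finset.mem_image.1 hmem with ⟨q, hq, hq2⟩
        have h1 := (h q hq).1
        have h2 := (h q hq).2
        have := congrArg Fin.val hq2
        rw [shf_val_ne 1 h1] at this
        rw [Nat.mod_eq_of_lt (by have := q.isLt; omega)] at this
        have : q.val - 1 + 1 + 1 = m + 2 := by rw [this]; rfl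
        omega
      simp [this]
    have : aw (j+1) = (0 : Fin 2) :: aw j := rfl
    rw [this, setEval_cons, hstep, ih ?_, image_shf_image_shf, Nat.add_comm 1 j]
    intro q hq
    rcases Finset.mem_image.1 hq with ⟨p, hp, rfl⟩
    have h1 := (h p hp).1
    have h2 := (h p hp).2
    constructor
    · exact shf_ne_zero 1 h1
    · rw [shf_val_ne 1 h1, Nat.mod_eq_of_lt (by have := p.isLt; omega)]
      omega

/-- valid states -/
def V (m : ℕ) := {S : Finset (Fin (m+3)) // Valid S}

instance : Fintype (V m) := by unfold V; infer_instance

/-- the deterministic star automaton -/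
def starDFA : DFA (Fin 2) (Option (V m)) where
  step := fun s c =>
    match s with
    | none => some ⟨stepSet M {0} c, valid_stepSet M ⟨0, Finset.mem_singleton_self 0⟩ c⟩
    | some ⟨S, hS⟩ => some ⟨stepSet M S c, valid_stepSet M hS.1 c⟩
  start := none
  accept := {s | match s with | none => True | some S => lst m ∈ S.1}

/-- the subset attached to a state -/
def proj (s : Option (V m)) : Finset (Fin (m+3)) := s.elim {0} Subtype.val

lemma valid_proj (s : Option (V m)) : Valid (proj s) := by
  match s with
  | none => exact ⟨⟨0, Finset.mem_singleton_self 0⟩, fun _ => Finset.mem_singleton_self 0⟩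
  | some ⟨S, hS⟩ => exact hS

lemma step_proj (s : Option (V m)) (c : Fin 2) :
    (starDFA M).step s c = some ⟨stepSet M (proj s) c, valid_stepSet M (valid_proj s).1 c⟩ := by
  match s with
  | none => rfl
  | some ⟨S, hS⟩ => rfl

lemma evalFrom_starDFA (w : List (Fin 2)) (hw : w ≠ []) (s : Option (V m)) :
    ∃ h : Valid (setEval M (proj s) w),
      (starDFA M).evalFrom s w = some ⟨setEval M (proj s) w, h⟩ := by
  induction w generalizing s with
  | nil => exact absurd rfl hw
  | cons c w ih =>
    rcases eq_or_ne w [] with rfl | hw'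
    · refine ⟨(valid_stepSet M (valid_proj s).1 c), ?_⟩
      show (starDFA M).step s c = _
      rw [step_proj]
      rfl
    · have : (starDFA M).evalFrom s (c :: w) = (starDFA M).evalFrom ((starDFA M).step s c) w := rfl
      rw [this, step_proj]
      rcases ih hw' (some ⟨stepSet M (proj s) c, valid_stepSet M (valid_proj s).1 c⟩) with ⟨h, heq⟩
      rw [heq]
      exact ⟨h, rfl⟩

lemma mem_accepts_starDFA_iff (x : List (Fin 2)) :
    x ∈ (starDFA M).accepts ↔ (x = [] ∨ lst m ∈ setEval M {0} x) := by
  rcases eq_or_ne x [] with rfl | hx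
  · constructor
    · intro; exact Or.inl rfl
    · intro
      show (starDFA M).start ∈ (starDFA M).accept
      trivial
  · rcases evalFrom_starDFA M x hx none with ⟨h, heq⟩
    rw [DFA.mem_accepts]
    show (starDFA M).evalFrom none x ∈ _ ↔ _
    rw [heq]
    constructor
    · intro hmem
      exact Or.inr hmem
    · rintro (rfl | hmem)
      · exact absurd rfl hx
      · exact hmem

section Lang

/-- split property -/
def P (w : List (Fin 2)) (q : Fin (m+3)) : Prop :=
  ∃ u v, w = u ++ v ∧ u ∈ M.accepts∗ ∧ M.evalFrom M.start v = q

lemma mem_L_iff (hacc : M.accept = {lst m}) (v : List (Fin 2)) :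
    v ∈ M.accepts ↔ M.evalFrom M.start v = lst m := by
  rw [DFA.mem_accepts, hacc]
  exact Set.mem_singleton_iff

lemma star_split {w : List (Fin 2)} (hw : w ∈ M.accepts∗) (hne : w ≠ []) :
    ∃ u v, w = u ++ v ∧ u ∈ M.accepts∗ ∧ v ∈ M.accepts ∧ v ≠ [] := by
  rcases Language.mem_kstar_iff_exists_nonempty.1 hw with ⟨S, rfl, hS⟩
  rcases List.eq_nil_or_concat S with rfl | ⟨S', v, hSv⟩
  · simp at hne
  · rw [List.concat_eq_append] at hSv
    subst hSv
    refine ⟨S'.flatten, v, ?_, ?_, ?_, ?_⟩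
    · rw [List.flatten_append]; simp
    · exact Language.join_mem_kstar (fun y hy => (hS y (List.mem_append_left _ hy)).1)
    · exact (hS v (List.mem_append_right _ (List.mem_singleton_self v))).1
    · exact (hS v (List.mem_append_right _ (List.mem_singleton_self v))).2

lemma star_append {u v : List (Fin 2)} (hu : u ∈ M.accepts∗) (hv : v ∈ M.accepts) :
    u ++ v ∈ M.accepts∗ := by
  rcases Language.mem_kstar.1 hu with ⟨S, rfl, hS⟩
  have : S.flatten ++ v = (S ++ [v]).flatten := by
    rw [List.flatten_append]; simp
  rw [this]
  apply Language.join_mem_kstar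
  intro y hy
  rcases List.mem_append.1 hy with h | h
  · exact hS y h
  · rw [List.mem_singleton.1 h]; exact hv

lemma mem_setEval_iff_P (hs : M.start = 0) (hacc : M.accept = {lst m}) (w : List (Fin 2)) (q : Fin (m+3)) :
    q ∈ setEval M {0} w ↔ P M w q := by
  induction w using List.reverseRecOn generalizing q with
  | nil =>
    simp only [setEval_nil, Finset.mem_singleton]
    constructor
    · rintro rfl
      exact ⟨[], [], rfl, Language.nil_mem_kstar _, hs⟩
    · rintro ⟨u, v, huv, hu, he⟩
      rcases List.append_eq_nil_iff.1 huv.symm with ⟨rfl, rfl⟩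
      rw [← he]
      simp [hs]
  | append_singleton w c ih =>
    rw [setEval_append,
      show setEval M (setEval M {0} w) [c] = stepSet M (setEval M {0} w) c from rfl,
      mem_stepSet_iff]
    constructor
    · rintro (⟨p, hp, rfl⟩ | ⟨rfl, p, hp, hstep⟩)
      · rcases (ih p).1 hp with ⟨u, v, rfl, hu, rfl⟩
        exact ⟨u, v ++ [c], by rw [List.append_assoc], hu, by rw [M.evalFrom_append_singleton]⟩
      · rcases (ih p).1 hp with ⟨u, v, rfl, hu, rfl⟩
        have hvc : v ++ [c] ∈ M.accepts := by
          rw [mem_L_iff M hacc, M.evalFrom_append_singleton, hstep]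
        refine ⟨(u ++ v) ++ [c], [], (List.append_nil _).symm, ?_, hs⟩
        rw [List.append_assoc]
        exact star_append M hu hvc
    · rintro ⟨u, v, huv, hu, he⟩
      rcases List.eq_nil_or_concat v with rfl | ⟨v', c', hvc⟩
      · rw [List.append_nil] at huv
        subst huv
        rcases star_split M hu (by simp) with ⟨u', v', huv', hu', hv', hvne⟩
        rcases List.eq_nil_or_concat v' with rfl | ⟨v'', c', hvc2⟩
        · exact absurd rfl hvne
        · rw [List.concat_eq_append] at hvc2
          subst hvc2
          rw [← List.append_assoc] at huv'
          rcases List.append_inj' huv' rfl with ⟨hw, hc⟩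
          have hc' : c = c' := by injection hc
          subst hc'
          refine Or.inr ⟨?_, M.evalFrom (M.start) v'', ?_, ?_⟩
          · rw [← he]
            simp [hs]
          · exact (ih _).2 ⟨u', v'', hw, hu', rfl⟩
          · rw [← M.evalFrom_append_singleton, ← mem_L_iff M hacc]
            exact hv'
      · rw [List.concat_eq_append] at hvc
        subst hvc
        rw [← List.append_assoc] at huv
        rcases List.append_inj' huv rfl with ⟨hw, hc⟩
        have hc' : c = c' := by injection hc
        subst hc'
        refine Or.inl ⟨M.evalFrom M.start v', ?_, ?_⟩
        · exact (ih _).2 ⟨u, v', hw, hu, rfl⟩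
        · rw [← he, M.evalFrom_append_singleton]

lemma accepts_starDFA (hs : M.start = 0) (hacc : M.accept = {lst m}) : (starDFA M).accepts = M.accepts∗ := by
  ext x
  rw [mem_accepts_starDFA_iff]
  constructor
  · rintro (rfl | hmem)
    · exact Language.nil_mem_kstar _
    · rcases (mem_setEval_iff_P M hs hacc x (lst m)).1 hmem with ⟨u, v, rfl, hu, he⟩
      exact star_append M hu ((mem_L_iff M hacc v).2 he)
  · intro hx
    rcases eq_or_ne x [] with rfl | hne
    · exact Or.inl rfl
    · rcases star_split M hx hne with ⟨u, v, rfl, hu, hv, hvne⟩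
      exact Or.inr ((mem_setEval_iff_P M hs hacc _ (lst m)).2
        ⟨u, v, rfl, hu, (mem_L_iff M hacc v).1 hv⟩)

end Lang

end M2

section Card

lemma zero_ne_lst : (0 : Fin (m+3)) ≠ lst m := by
  intro h
  have := congrArg Fin.val h
  simp [lst] at this

lemma not_valid_iff (S : Finset (Fin (m+3))) :
    ¬ Valid S ↔ (S = ∅ ∨ (lst m ∈ S ∧ (0 : Fin (m+3)) ∉ S)) := by
  unfold Valid
  rw [not_and_or, Finset.not_nonempty_iff_eq_empty]
  constructor
  · rintro (h | h)
    · exact Or.inl h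
    · push_neg at h
      exact Or.inr h
  · rintro (h | h)
    · exact Or.inl h
    · refine Or.inr ?_
      push_neg
      exact h

/-- the bad sets containing the last state but not 0 -/
def badB (m : ℕ) : Finset (Finset (Fin (m+3))) :=
  (((Finset.univ : Finset (Fin (m+3))).erase 0).erase (lst m)).powerset.image (insert (lst m))

lemma mem_badB {S : Finset (Fin (m+3))} :
    S ∈ badB m ↔ (lst m ∈ S ∧ (0 : Fin (m+3)) ∉ S) := by
  unfold badB
  rw [Finset.mem_image]
  constructor
  · rintro ⟨T, hT, rfl⟩
    rw [Finset.mem_powerset] at hT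
    constructor
    · exact Finset.mem_insert_self _ _
    · intro h0
      rcases Finset.mem_insert.1 h0 with h | h
      · exact zero_ne_lst h
      · exact absurd (Finset.mem_of_mem_erase (hT h)) (Finset.notMem_erase _ _)
  · rintro ⟨h1, h2⟩
    refine ⟨S.erase (lst m), ?_, Finset.insert_erase h1⟩
    rw [Finset.mem_powerset]
    intro x hx
    refine Finset.mem_erase.2 ⟨Finset.ne_of_mem_erase hx, ?_⟩
    refine Finset.mem_erase.2 ⟨?_, Finset.mem_univ x⟩
    intro h
    exact h2 (h ▸ Finset.mem_of_mem_erase hx)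

lemma card_badB : (badB m).card = 2^(m+1) := by
  unfold badB
  rw [Finset.card_image_of_injOn, Finset.card_powerset, Finset.card_erase_of_mem,
    Finset.card_erase_of_mem, Finset.card_univ, Fintype.card_fin]
  · rfl
  · exact Finset.mem_univ _
  · refine Finset.mem_erase.2 ⟨fun h => zero_ne_lst h.symm, Finset.mem_univ _⟩
  · intro T hT T' hT' h
    rw [Finset.mem_coe, Finset.mem_powerset] at hT hT'
    have hl : lst m ∉ T := fun hc => Finset.ne_of_mem_erase (hT hc) rfl
    have hl' : lst m ∉ T' := fun hc => Finset.ne_of_mem_erase (hT' hc) rfl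
    rw [← Finset.erase_insert hl, ← Finset.erase_insert hl', h]

lemma card_valid :
    (Finset.univ.filter (Valid (m := m))).card = 2^(m+3) - 1 - 2^(m+1) := by
  have hsplit := Finset.card_filter_add_card_filter_not
    (s := (Finset.univ : Finset (Finset (Fin (m+3))))) (p := Valid (m := m))
  have huniv : (Finset.univ : Finset (Finset (Fin (m+3)))).card = 2^(m+3) := by
    rw [Finset.card_univ, Fintype.card_finset, Fintype.card_fin]
  have hneg : (Finset.univ.filter (fun S => ¬ Valid (m := m) S)).card = 1 + 2^(m+1) := by
    have : Finset.univ.filter (fun S => ¬ Valid (m := m) S) = insert ∅ (badB m) := by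
      ext S
      rw [Finset.mem_filter, Finset.mem_insert, not_valid_iff, mem_badB]
      simp
    rw [this, Finset.card_insert_of_notMem
      (fun h => absurd (mem_badB.1 h).1 (Finset.notMem_empty _)), card_badB]
    omega
  omega

lemma card_optV : Fintype.card (Option (V m)) = 2^(m+2) + 2^(m+1) := by
  rw [Fintype.card_option]
  have : Fintype.card (V m) = (Finset.univ.filter (Valid (m := m))).card := by
    unfold V
    convert Fintype.card_subtype (Valid (m := m))
  rw [this, card_valid]
  have h1 : 2^(m+3) = 2^(m+1)*4 := by ring
  have h2 : 2^(m+2) = 2^(m+1)*2 := by ring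
  have h3 : 1 ≤ 2^(m+1) := Nat.one_le_two_pow
  omega

end Card

section Dist

variable (M : DFA (Fin 2) (Fin (m+3)))

/-- the unique nonzero state sent to `lst` by `a^j` -/
def pre (j : ℕ) : Fin (m+3) := shf (m+2 - j % (m+2)) (lst m)

lemma lst_val : (lst m).val = m + 2 := rfl

lemma pre_val_ne_zero (j : ℕ) : (pre (m := m) j).val ≠ 0 :=
  shf_ne_zero _ (by rw [lst_val]; omega)

lemma shf_pre (j : ℕ) : shf j (pre (m := m) j) = lst m := by
  unfold pre
  rw [shf_shf, Nat.add_comm (m + 2 - j % (m + 2)) j, ← shf_shf, shf_left_inv]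

lemma pre_zero : pre (m := m) 0 = lst m := by
  unfold pre
  rw [Nat.zero_mod, Nat.sub_zero, shf_period]

lemma pre_succ (j : ℕ) : pre (m := m) (j+1) = shf (m+1) (pre j) := by
  unfold pre
  rw [shf_shf]
  rw [shf_mod (m + 2 - (j + 1) % (m + 2)), shf_mod (m + 2 - j % (m + 2) + (m + 1))]
  congr 1
  have hc : j % (m+2) < m+2 := Nat.mod_lt _ (by omega)
  have hj1 : (j+1) % (m+2) = (j % (m+2) + 1) % (m+2) := by
    rw [Nat.add_mod j 1, Nat.mod_eq_of_lt (show 1 < m+2 by omega)]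
  rcases eq_or_ne (j % (m+2)) (m+1) with h | h
  · rw [hj1, h, show m + 1 + 1 = m + 2 from rfl, Nat.mod_self, Nat.sub_zero]
    have h2 : (m + 2 - (m+1) + (m+1)) = m + 2 := by omega
    rw [h2]
  · have hlt : j % (m+2) + 1 < m + 2 := by omega
    rw [hj1, Nat.mod_eq_of_lt hlt]
    have e1 : m + 2 - (j % (m+2) + 1) = m + 1 - j % (m+2) := by omega
    have e2 : m + 2 - j % (m+2) + (m+1) = (m + 1 - j % (m+2)) + (m+2) := by omega
    rw [e1, e2, Nat.add_mod_right]

lemma lst_mem_setEval_aw (ha : HA M) (j : ℕ) (S : Finset (Fin (m+3))) :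
    lst m ∈ setEval M S (aw j) ↔ pre (m := m) j ∈ S := by
  induction j generalizing S with
  | zero => rw [pre_zero]; rfl
  | succ j ih =>
    have : aw (j+1) = (0 : Fin 2) :: aw j := rfl
    rw [this, setEval_cons, ih, mem_stepSet_iff, pre_succ]
    constructor
    · rintro (⟨p, hp, hpe⟩ | ⟨h0, _⟩)
      · rw [step_a M ha] at hpe
        have : p = shf (m+1) (pre (m := m) j) := by
          rw [← hpe, shf_shf]
          rw [show (1 + (m+1)) = m + 2 by omega, shf_period]
        rwa [← this]
      · exact absurd (congrArg Fin.val h0) (pre_val_ne_zero j)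
    · intro hp
      refine Or.inl ⟨shf (m+1) (pre (m := m) j), hp, ?_⟩
      rw [step_a M ha, shf_shf]
      rw [show (m + 1 + 1) = m + 2 from rfl, shf_period]

lemma one_val : ((1 : Fin (m+3))).val = 1 := rfl

lemma pre_m1 : pre (m := m) (m+1) = (1 : Fin (m+3)) := by
  unfold pre
  rw [Nat.mod_eq_of_lt (by omega)]
  apply Fin.ext
  rw [shf_val_ne _ (by rw [lst_val]; omega), lst_val, one_val]
  have : m + 2 - 1 + (m + 2 - (m+1)) = m + 2 := by omega
  rw [this, Nat.mod_self]

lemma lst_mem_setEval_bword (ha : HA M) (hb : HB M) (S : Finset (Fin (m+3))) :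
    lst m ∈ setEval M S ((1 : Fin 2) :: aw (m+1)) ↔ (0 : Fin (m+3)) ∈ S := by
  rw [setEval_cons, lst_mem_setEval_aw M ha, pre_m1, mem_stepSet_iff]
  constructor
  · rintro (⟨p, hp, hpe⟩ | ⟨h0, _⟩)
    · rcases Nat.lt_or_ge p.val 2 with h2 | h2
      · rcases Nat.lt_or_ge p.val 1 with h1 | h1
        · rwa [show p = 0 from Fin.ext (by rw [val_zero]; omega)] at hp
        · rw [show p = 1 from Fin.ext (by rw [one_val]; omega), step_b1 M hb] at hpe
          exact absurd (congrArg Fin.val hpe) (by rw [val_zero, one_val]; omega)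
      · rw [step_bhi M hb h2] at hpe
        rw [hpe, one_val] at h2
        exact absurd h2 (by omega)
    · exact absurd (congrArg Fin.val h0) (by rw [one_val, val_zero]; omega)
  · intro h0
    exact Or.inl ⟨0, h0, step_b0 M hb⟩

/-- word testing membership of `q` -/
def zword (q : Fin (m+3)) : List (Fin 2) :=
  if q.val = 0 then (1 : Fin 2) :: aw (m+1) else aw (m+2 - q.val)

lemma lst_mem_setEval_zword (ha : HA M) (hb : HB M) (q : Fin (m+3)) (S : Finset (Fin (m+3))) :
    lst m ∈ setEval M S (zword q) ↔ q ∈ S := by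
  unfold zword
  rcases eq_or_ne q.val 0 with h | h
  · rw [if_pos h, lst_mem_setEval_bword M ha hb, show q = 0 from Fin.ext h]
  · rw [if_neg h, lst_mem_setEval_aw M ha]
    have hq : pre (m := m) (m + 2 - q.val) = q := by
      unfold pre
      have hv := q.isLt
      rw [Nat.mod_eq_of_lt (by omega)]
      apply Fin.ext
      rw [shf_val_ne _ (by rw [lst_val]; omega), lst_val]
      have : m + 2 - 1 + (m + 2 - (m + 2 - q.val)) = (q.val - 1) + (m + 2) := by omega
      rw [this, Nat.add_mod_right, Nat.mod_eq_of_lt (by omega)]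
      omega
    rw [hq]

lemma acceptFrom_some_iff (S : Finset (Fin (m+3))) (hS : Valid S) (z : List (Fin 2)) :
    (starDFA M).evalFrom (some ⟨S, hS⟩) z ∈ (starDFA M).accept ↔ lst m ∈ setEval M S z := by
  rcases eq_or_ne z [] with rfl | hz
  · exact Iff.rfl
  · rcases evalFrom_starDFA M z hz (some ⟨S, hS⟩) with ⟨h, heq⟩
    rw [heq]
    exact Iff.rfl

lemma acceptFrom_none_iff (z : List (Fin 2)) (hz : z ≠ []) :
    (starDFA M).evalFrom none z ∈ (starDFA M).accept ↔ lst m ∈ setEval M {0} z := by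
  rcases evalFrom_starDFA M z hz none with ⟨h, heq⟩
  rw [heq]
  exact Iff.rfl

lemma distinguish (ha : HA M) (hb : HB M) (s t : Option (V m)) (hst : s ≠ t) :
    ∃ z, ¬(((starDFA M).evalFrom s z ∈ (starDFA M).accept) ↔
      ((starDFA M).evalFrom t z ∈ (starDFA M).accept)) := by
  have key : ∀ (S : Finset (Fin (m+3))) (hS : Valid S) (T : Finset (Fin (m+3))) (hT : Valid T)
      (q : Fin (m+3)), q ∈ S → q ∉ T →
      ∃ z, ¬(((starDFA M).evalFrom (some ⟨S, hS⟩) z ∈ (starDFA M).accept) ↔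
        ((starDFA M).evalFrom (some ⟨T, hT⟩) z ∈ (starDFA M).accept)) := by
    intro S hS T hT q hqS hqT
    refine ⟨zword q, ?_⟩
    rw [acceptFrom_some_iff, acceptFrom_some_iff,
      lst_mem_setEval_zword M ha hb, lst_mem_setEval_zword M ha hb]
    intro hiff
    exact hqT (hiff.1 hqS)
  have keyn : ∀ (S : Finset (Fin (m+3))) (hS : Valid S),
      ∃ z, ¬(((starDFA M).evalFrom none z ∈ (starDFA M).accept) ↔
        ((starDFA M).evalFrom (some ⟨S, hS⟩) z ∈ (starDFA M).accept)) := by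
    intro S hS
    by_cases hl : lst m ∈ S
    · refine ⟨[(1 : Fin 2)], ?_⟩
      rw [acceptFrom_none_iff M _ (by simp), acceptFrom_some_iff]
      have h1 : setEval M {0} [(1 : Fin 2)] = stepSet M {0} 1 := rfl
      have h2 : setEval M S [(1 : Fin 2)] = stepSet M S 1 := rfl
      rw [h1, h2]
      intro hiff
      have hr : lst m ∈ stepSet M S 1 := by
        rw [mem_stepSet_iff]
        exact Or.inl ⟨lst m, hl, step_bhi M hb (q := lst m) (by rw [lst_val]; omega)⟩
      have hli := hiff.2 hr
      rw [mem_stepSet_iff] at hli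
      rcases hli with ⟨p, hp, hpe⟩ | ⟨h0, _⟩
      · rw [Finset.mem_singleton] at hp
        subst hp
        rw [step_b0 M hb] at hpe
        exact absurd (congrArg Fin.val hpe) (by rw [one_val, lst_val]; omega)
      · exact absurd (congrArg Fin.val h0) (by rw [lst_val, val_zero]; omega)
    · refine ⟨[], ?_⟩
      intro hiff
      have : (starDFA M).evalFrom none [] ∈ (starDFA M).accept := trivial
      exact hl (hiff.1 this)
  match s, t with
  | none, none => exact absurd rfl hst
  | none, some ⟨S, hS⟩ => exact keyn S hS
  | some ⟨S, hS⟩, none =>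
    rcases keyn S hS with ⟨z, hz⟩
    exact ⟨z, fun h => hz h.symm⟩
  | some ⟨S, hS⟩, some ⟨T, hT⟩ =>
    have hne : S ≠ T := by
      intro h
      apply hst
      subst h
      rfl
    have : ∃ q, (q ∈ S ∧ q ∉ T) ∨ (q ∈ T ∧ q ∉ S) := by
      by_contra hcon
      push_neg at hcon
      apply hne
      ext q
      rcases hcon q with ⟨h1, h2⟩
      exact ⟨fun h => h1 h, fun h => h2 h⟩
    rcases this with ⟨q, ⟨h1, h2⟩ | ⟨h1, h2⟩⟩
    · exact key S hS T hT q h1 h2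
    · rcases key T hT S hS q h1 h2 with ⟨z, hz⟩
      exact ⟨z, fun h => hz h.symm⟩

end Dist

section Reach

variable (M : DFA (Fin 2) (Fin (m+3)))

lemma ne_zero_val {q : Fin (m+3)} (h : q ≠ 0) : q.val ≠ 0 :=
  fun hv => h (Fin.ext (by rw [hv, val_zero]))

lemma image_shf_id (S : Finset (Fin (m+3))) : S.image (shf (m+2)) = S := by
  have : shf (m := m) (m+2) = id := funext shf_period
  rw [this, Finset.image_id]

lemma shf_one_zero : shf 1 (0 : Fin (m+3)) = 0 := Fin.ext (by rw [shf_zero_val, val_zero])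

lemma lst_ne_zero : lst m ≠ (0 : Fin (m+3)) := by
  intro h
  have := congrArg Fin.val h
  rw [lst_val, val_zero] at this
  omega

lemma stepSet_single_a (ha : HA M) : stepSet M {0} 0 = ({0} : Finset (Fin (m+3))) := by
  unfold stepSet
  rw [Finset.image_singleton, step_a M ha, shf_one_zero]
  rw [if_neg]
  intro h
  exact lst_ne_zero (Finset.mem_singleton.1 h)

lemma closed_eq_univ_erase {S' : Finset (Fin (m+3))} (hne : S'.Nonempty)
    (hnz : ∀ q ∈ S', q ≠ (0 : Fin (m+3))) (hclosed : ∀ r ∈ S', shf 1 r ∈ S') :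
    S' = Finset.univ.erase 0 := by
  obtain ⟨q₀, hq₀⟩ := hne
  have horb : ∀ j, shf j q₀ ∈ S' := by
    intro j
    induction j with
    | zero => rw [shf_zero']; exact hq₀
    | succ j ih =>
      have := hclosed _ ih
      rwa [shf_shf 1 j q₀] at this
  ext p
  rw [Finset.mem_erase]
  constructor
  · intro hp
    exact ⟨hnz p hp, Finset.mem_univ p⟩
  · rintro ⟨hp, -⟩
    have hq0v := ne_zero_val (hnz q₀ hq₀)
    have hpv := ne_zero_val hp
    have hq0lt := q₀.isLt
    have hplt := p.isLt
    have : p = shf (p.val + (m+2) - q₀.val) q₀ := by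
      apply Fin.ext
      rw [shf_val_ne _ hq0v]
      have he : q₀.val - 1 + (p.val + (m+2) - q₀.val) = (p.val - 1) + (m+2) := by omega
      rw [he, Nat.add_mod_right, Nat.mod_eq_of_lt (by omega)]
      omega
    rw [this]
    exact horb _

lemma univ_rebuild :
    insert (0 : Fin (m+3)) (insert 1 ((Finset.univ.erase (0 : Fin (m+3))).erase 1)) =
      Finset.univ := by
  ext q
  simp only [Finset.mem_insert, Finset.mem_erase, Finset.mem_univ, and_true, iff_true]
  by_cases h0 : q = 0
  · exact Or.inl h0
  · by_cases h1 : q = 1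
    · exact Or.inr (Or.inl h1)
    · exact Or.inr (Or.inr ⟨h1, h0⟩)

lemma reach_aux (ha : HA M) (hb : HB M) :
    ∀ N : ℕ, ∀ S : Finset (Fin (m+3)), Valid S →
      (2*S.card - (if (0 : Fin (m+3)) ∈ S then 2 else 1)) ≤ N →
      ∃ w, setEval M {0} w = S := by
  intro N
  induction N with
  | zero =>
    intro S hS hμ
    have hc : 1 ≤ S.card := Finset.card_pos.2 hS.1
    by_cases h0 : (0 : Fin (m+3)) ∈ S
    · rw [if_pos h0] at hμ
      have hcard : S.card = 1 := by omega
      have : S = {0} := by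
        rcases Finset.card_eq_one.1 hcard with ⟨a, rfl⟩
        rw [Finset.mem_singleton.1 h0]
      rw [this]
      exact ⟨[(0 : Fin 2)], stepSet_single_a M ha⟩
    · rw [if_neg h0] at hμ
      omega
  | succ N ih =>
    intro S hS hμ
    by_cases h0 : (0 : Fin (m+3)) ∈ S
    · -- type (i): 0 ∈ S
      rw [if_pos h0] at hμ
      set S' := S.erase 0 with hS'def
      rcases Finset.eq_empty_or_nonempty S' with hS'e | hS'ne
      · -- S = {0}
        have : S = {0} := by
          rcases (Finset.erase_eq_empty_iff _ _).1 hS'e with h | h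
          · exact absurd h (Finset.nonempty_iff_ne_empty.1 hS.1)
          · exact h
        rw [this]
        exact ⟨[(0 : Fin 2)], stepSet_single_a M ha⟩
      · have hS'nz : ∀ q ∈ S', q ≠ (0 : Fin (m+3)) := fun q hq => Finset.ne_of_mem_erase hq
        have hScard : S.card = S'.card + 1 := by
          rw [hS'def, Finset.card_erase_of_mem h0]
          have := Finset.card_pos.2 hS.1
          omega
        by_cases hgap : ∃ r ∈ S', shf 1 r ∉ S'
        · -- gap case
          obtain ⟨r, hrS, hrgap⟩ := hgap
          have hrv := ne_zero_val (hS'nz r hrS)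
          have hrlt := r.isLt
          set t := r.val with htdef
          set u := m + 2 - t with hudef
          set S'' := S'.image (shf u) with hS''def
          set T := S''.image (shf (m+1)) with hTdef
          have hlstS'' : lst m ∈ S'' := by
            refine Finset.mem_image.2 ⟨r, hrS, ?_⟩
            apply Fin.ext
            rw [shf_val_ne _ hrv, lst_val]
            have : t - 1 + u = m + 1 := by omega
            rw [this, Nat.mod_eq_of_lt (by omega)]
          have honeS'' : (1 : Fin (m+3)) ∉ S'' := by
            intro hmem
            rcases Finset.mem_image.1 hmem with ⟨q, hq, hq1⟩
            have : shf u (shf 1 r) = (1 : Fin (m+3)) := by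
              rw [shf_shf]
              apply Fin.ext
              rw [shf_val_ne _ hrv, one_val]
              have : t - 1 + (1 + u) = m + 2 := by omega
              rw [this, Nat.mod_self]
            have := shf_injective u (hq1.trans this.symm)
            rw [this] at hq
            exact hrgap hq
          have hTnz : ∀ q ∈ T, q ≠ (0 : Fin (m+3)) := by
            intro q hq
            rcases Finset.mem_image.1 hq with ⟨x, hx, rfl⟩
            rcases Finset.mem_image.1 hx with ⟨y, hy, rfl⟩
            have hyv := ne_zero_val (hS'nz y hy)
            intro hcon
            exact shf_ne_zero (m+1) (shf_ne_zero u hyv) (congrArg Fin.val hcon)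
          have hTvalid : Valid T := by
            constructor
            · exact ((hS'ne.image _).image _)
            · intro hlstT
              exfalso
              rcases Finset.mem_image.1 hlstT with ⟨x, hx, hxe⟩
              have : shf (m+1) (shf 1 (lst m)) = lst m := by
                rw [shf_shf]
                rw [show 1 + (m+1) = m + 2 by omega, shf_period]
              have hx1 : x = shf 1 (lst m) := shf_injective (m+1) (hxe.trans this.symm)
              have : shf 1 (lst m) = (1 : Fin (m+3)) := by
                apply Fin.ext
                rw [shf_val_ne _ (by rw [lst_val]; omega), lst_val, one_val]
                have : m + 2 - 1 + 1 = m + 2 := by omega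
                rw [this, Nat.mod_self]
              rw [hx1, this] at hx
              exact honeS'' hx
          have hTcard : T.card = S'.card := by
            rw [hTdef, hS''def, Finset.card_image_of_injective _ (shf_injective _),
              Finset.card_image_of_injective _ (shf_injective _)]
          have h0T : (0 : Fin (m+3)) ∉ T := fun hc => hTnz 0 hc rfl
          obtain ⟨w, hw⟩ := ih T hTvalid (by rw [if_neg h0T]; omega)
          -- now compute
          have hstep : stepSet M T 0 = insert 0 S'' := by
            unfold stepSet
            rw [image_step_a M ha]
            have himg : T.image (shf 1) = S'' := by
              rw [hTdef, image_shf_image_shf, show m + 1 + 1 = m + 2 from rfl, image_shf_id]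
            rw [himg, if_pos hlstS'']
          have hfinal : setEval M (insert 0 S'') (aw t) = S := by
            rw [setEval_aw_of_zero_mem M ha (Finset.mem_insert_self 0 _) t,
              Finset.image_insert]
            have h1 : shf t (0 : Fin (m+3)) = 0 := Fin.ext (by rw [shf_zero_val, val_zero])
            have h2 : S''.image (shf t) = S' := by
              rw [hS''def, image_shf_image_shf, show u + t = m + 2 by omega, image_shf_id]
            rw [h1, h2, hS'def, Finset.insert_erase h0]
          refine ⟨w ++ ([(0 : Fin 2)] ++ aw t), ?_⟩
          rw [setEval_append, hw, setEval_append]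
          rw [show setEval M T [(0 : Fin 2)] = stepSet M T 0 from rfl, hstep, hfinal]
        · -- no gap: S = univ
          push_neg at hgap
          have hS'univ : S' = Finset.univ.erase 0 := closed_eq_univ_erase hS'ne hS'nz hgap
          have hSuniv : S = Finset.univ := by
            have : S = insert 0 S' := (Finset.insert_erase h0).symm
            rw [this, hS'univ, Finset.insert_erase (Finset.mem_univ 0)]
          set F := ((Finset.univ.erase (0 : Fin (m+3))).erase 1) with hFdef
          set P := insert (0 : Fin (m+3)) F with hPdef
          have h1mem : (1 : Fin (m+3)) ∈ Finset.univ.erase (0 : Fin (m+3)) := by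
            refine Finset.mem_erase.2 ⟨?_, Finset.mem_univ _⟩
            intro h
            have := congrArg Fin.val h
            rw [one_val, val_zero] at this
            omega
          have h0F : (0 : Fin (m+3)) ∉ F := by
            intro h
            exact (Finset.mem_erase.1 (Finset.mem_of_mem_erase h)).1 rfl
          have hPvalid : Valid P := ⟨⟨0, Finset.mem_insert_self _ _⟩,
            fun _ => Finset.mem_insert_self _ _⟩
          have hPcard : P.card = m + 2 := by
            rw [hPdef, Finset.card_insert_of_notMem h0F, hFdef,
              Finset.card_erase_of_mem h1mem, Finset.card_erase_of_mem (Finset.mem_univ _),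
              Finset.card_univ, Fintype.card_fin]
            omega
          have hScard2 : S.card = m + 3 := by
            rw [hSuniv, Finset.card_univ, Fintype.card_fin]
          obtain ⟨w, hw⟩ := ih P hPvalid
            (by rw [if_pos (Finset.mem_insert_self _ _), hPcard]; omega)
          refine ⟨w ++ [(1 : Fin 2)], ?_⟩
          rw [setEval_append, hw,
            show setEval M P [(1 : Fin 2)] = stepSet M P 1 from rfl]
          unfold stepSet
          have himg : P.image (fun q => M.step q 1) = insert 1 F := by
            rw [hPdef, Finset.image_insert, step_b0 M hb]
            congr 1
            have : ∀ q ∈ F, M.step q 1 = q := by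
              intro q hq
              have hq1 : q ≠ (1 : Fin (m+3)) := (Finset.mem_erase.1 hq).1
              have hq0 : q ≠ (0 : Fin (m+3)) :=
                (Finset.mem_erase.1 (Finset.mem_of_mem_erase hq)).1
              refine step_bhi M hb ?_
              have h1 := ne_zero_val hq0
              have h2 : q.val ≠ 1 := fun hv => hq1 (Fin.ext (by rw [hv, one_val]))
              omega
            calc F.image (fun q => M.step q 1) = F.image id := Finset.image_congr this
              _ = F := Finset.image_id
          rw [himg]
          have hlstmem : lst m ∈ insert (1 : Fin (m+3)) F := by
            refine Finset.mem_insert.2 (Or.inr ?_)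
            refine Finset.mem_erase.2 ⟨?_, Finset.mem_erase.2 ⟨lst_ne_zero, Finset.mem_univ _⟩⟩
            intro h
            have := congrArg Fin.val h
            rw [lst_val, one_val] at this
            omega
          rw [if_pos hlstmem, hSuniv, ← univ_rebuild]
    · -- type (ii): 0 ∉ S
      rw [if_neg h0] at hμ
      have hlstS : lst m ∉ S := fun h => h0 (hS.2 h)
      have hnz : ∀ q ∈ S, q.val ≠ 0 := by
        intro q hq
        exact ne_zero_val (fun hc => h0 (hc ▸ hq))
      have hub : ∀ q ∈ S, q.val ≤ m + 1 := by
        intro q hq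
        have := q.isLt
        have : q.val ≠ m + 2 := fun hv => hlstS ((Fin.ext (hv.trans lst_val.symm) : q = lst m) ▸ hq)
        omega
      obtain ⟨tm, htm⟩ : ∃ tm, tm ∈ S ∧ ∀ q ∈ S, tm.val ≤ q.val := by
        refine ⟨S.min' hS.1, S.min'_mem hS.1, fun q hq => ?_⟩
        exact Fin.le_iff_val_le_val.1 (S.min'_le q hq)
      set d := tm.val - 1 with hddef
      have htmv := hnz tm htm.1
      have htmub := hub tm htm.1
      set S₀ := S.image (shf (m+2-d)) with hS₀def
      have hS₀val : ∀ p ∈ S, (shf (m+2-d) p).val = p.val - d := by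
        intro p hp
        have hpv := hnz p hp
        have hplb := htm.2 p hp
        rw [shf_val_ne _ hpv]
        have : p.val - 1 + (m + 2 - d) = (p.val - 1 - d) + (m+2) := by omega
        rw [this, Nat.add_mod_right, Nat.mod_eq_of_lt (by have := p.isLt; omega)]
        omega
      have hone : (1 : Fin (m+3)) ∈ S₀ := by
        refine Finset.mem_image.2 ⟨tm, htm.1, ?_⟩
        apply Fin.ext
        rw [hS₀val tm htm.1, one_val]
        omega
      set F := S₀.erase 1 with hFdef
      set P := insert (0 : Fin (m+3)) F with hPdef
      have h0S₀ : (0 : Fin (m+3)) ∉ S₀ := by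
        intro h
        rcases Finset.mem_image.1 h with ⟨p, hp, hpe⟩
        have := congrArg Fin.val hpe
        rw [hS₀val p hp, val_zero] at this
        have := htm.2 p hp
        omega
      have h0F : (0 : Fin (m+3)) ∉ F := fun h => h0S₀ (Finset.mem_of_mem_erase h)
      have hPvalid : Valid P := ⟨⟨0, Finset.mem_insert_self _ _⟩,
        fun _ => Finset.mem_insert_self _ _⟩
      have hPcard : P.card = S.card := by
        rw [hPdef, Finset.card_insert_of_notMem h0F, hFdef, Finset.card_erase_of_mem hone,
          hS₀def, Finset.card_image_of_injective _ (shf_injective _)]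
        have : 1 ≤ S.card := Finset.card_pos.2 hS.1
        omega
      obtain ⟨w, hw⟩ := ih P hPvalid
        (by rw [if_pos (Finset.mem_insert_self _ _), hPcard]; omega)
      have hstep : stepSet M P 1 = S₀ := by
        unfold stepSet
        have himg : P.image (fun q => M.step q 1) = S₀ := by
          rw [hPdef, Finset.image_insert, step_b0 M hb]
          have hF : F.image (fun q => M.step q 1) = F := by
            have : ∀ q ∈ F, M.step q 1 = q := by
              intro q hq
              have hq1 : q ≠ (1 : Fin (m+3)) := (Finset.mem_erase.1 hq).1
              have hqS₀ : q ∈ S₀ := Finset.mem_of_mem_erase hq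
              rcases Finset.mem_image.1 hqS₀ with ⟨p, hp, rfl⟩
              refine step_bhi M hb ?_
              have h1 := hS₀val p hp
              have h2 : (shf (m+2-d) p).val ≠ 1 :=
                fun hv => hq1 (Fin.ext (by rw [hv, one_val]))
              have := htm.2 p hp
              omega
            calc F.image (fun q => M.step q 1) = F.image id := Finset.image_congr this
              _ = F := Finset.image_id
          rw [hF, hFdef, Finset.insert_erase hone]
        rw [himg]
        have hlstS₀ : lst m ∉ S₀ := by
          intro h
          rcases Finset.mem_image.1 h with ⟨p, hp, hpe⟩
          have := congrArg Fin.val hpe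
          rw [hS₀val p hp, lst_val] at this
          have := hub p hp
          omega
        rw [if_neg hlstS₀]
      have hfinal : setEval M S₀ (aw d) = S := by
        rw [setEval_aw_small M ha ?_]
        · rw [hS₀def, image_shf_image_shf, show m + 2 - d + d = m + 2 by omega, image_shf_id]
        · intro q hq
          rcases Finset.mem_image.1 hq with ⟨p, hp, rfl⟩
          rw [hS₀val p hp]
          have := hnz p hp
          have := hub p hp
          have := htm.2 p hp
          constructor <;> omega
      refine ⟨w ++ ([(1 : Fin 2)] ++ aw d), ?_⟩
      rw [setEval_append, hw, setEval_append,
        show setEval M P [(1 : Fin 2)] = stepSet M P 1 from rfl, hstep, hfinal]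

lemma reach (ha : HA M) (hb : HB M) (S : Finset (Fin (m+3))) (hS : Valid S) :
    ∃ w, setEval M {0} w = S :=
  reach_aux M ha hb _ S hS le_rfl

end Reach

section Glue

variable (M : DFA (Fin 2) (Fin (m+3)))

lemma valid_setEval' {X : Finset (Fin (m+3))} (hX : Valid X) (w : List (Fin 2)) :
    Valid (setEval M X w) := by
  rcases eq_or_ne w [] with rfl | hw
  · exact hX
  · exact valid_setEval M hX.1 w hw

lemma evalFrom_some (w : List (Fin 2)) (X : Finset (Fin (m+3))) (hX : Valid X)
    (h' : Valid (setEval M X w)) :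
    (starDFA M).evalFrom (some ⟨X, hX⟩) w = some ⟨setEval M X w, h'⟩ := by
  rcases eq_or_ne w [] with rfl | hw
  · rfl
  · rcases evalFrom_starDFA M w hw (some ⟨X, hX⟩) with ⟨h, heq⟩
    exact heq

lemma reach_state (ha : HA M) (hb : HB M) (s : Option (V m)) :
    ∃ w, (starDFA M).eval w = s := by
  match s with
  | none => exact ⟨[], rfl⟩
  | some ⟨S, hS⟩ =>
    obtain ⟨w, hw⟩ := reach M ha hb S hS
    refine ⟨(0 : Fin 2) :: w, ?_⟩
    have h1 : (starDFA M).eval ((0 : Fin 2) :: w)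
        = (starDFA M).evalFrom ((starDFA M).step none (0 : Fin 2)) w := rfl
    have h2 : (starDFA M).step none (0 : Fin 2)
        = some ⟨({0} : Finset (Fin (m+3))), show Valid ({0} : Finset (Fin (m+3))) from valid_proj none⟩ := by
      show some _ = some _
      congr 1
      exact Subtype.ext (stepSet_single_a M ha)
    rw [h1, h2, evalFrom_some M w {0} _ (hw ▸ hS)]
    congr 1
    exact Subtype.ext hw

lemma eval_accept_iff (hs : M.start = 0) (hacc : M.accept = {lst m})
    {k' : ℕ} (N : DFA (Fin 2) (Fin k')) (hN : N.accepts = M.accepts∗)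
    (w : List (Fin 2)) (s' : Option (V m)) (hws : (starDFA M).eval w = s')
    (z : List (Fin 2)) :
    ((starDFA M).evalFrom s' z ∈ (starDFA M).accept ↔
      N.evalFrom (N.eval w) z ∈ N.accept) := by
  have h1 : (starDFA M).evalFrom s' z ∈ (starDFA M).accept ↔
      (w ++ z) ∈ (starDFA M).accepts := by
    rw [DFA.mem_accepts, DFA.eval, DFA.evalFrom_of_append, ← DFA.eval, hws]
  have h2 : N.evalFrom (N.eval w) z ∈ N.accept ↔ (w ++ z) ∈ N.accepts := by
    rw [DFA.mem_accepts, DFA.eval, DFA.evalFrom_of_append, ← DFA.eval]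
  rw [h1, h2, accepts_starDFA M hs hacc, hN]

lemma lower_bound (ha : HA M) (hb : HB M) (hs : M.start = 0) (hacc : M.accept = {lst m})
    {k' : ℕ} (N : DFA (Fin 2) (Fin k')) (hN : N.accepts = M.accepts∗) :
    2^(m+2) + 2^(m+1) ≤ k' := by
  have hword : ∀ s : Option (V m), ∃ w, (starDFA M).eval w = s := reach_state M ha hb
  have hinj : Function.Injective (fun s : Option (V m) =>
      N.eval (Classical.choose (hword s))) := by
    intro s t hst
    by_contra hne
    obtain ⟨z, hz⟩ := distinguish M ha hb s t hne
    apply hz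
    rw [eval_accept_iff M hs hacc N hN _ s (Classical.choose_spec (hword s)) z,
      eval_accept_iff M hs hacc N hN _ t (Classical.choose_spec (hword t)) z]
    simp only at hst
    rw [hst]
  have := Fintype.card_le_of_injective _ hinj
  rwa [card_optV, Fintype.card_fin] at this

end Glue

/-- transport a DFA along a cardinality equality -/
lemma exists_dfa_fin {α : Type} {Q : Type} [Fintype Q] (M' : DFA α Q) (k : ℕ)
    (h : Fintype.card Q = k) : ∃ D : DFA α (Fin k), D.accepts = M'.accepts := by
  let e : Q ≃ Fin k := Fintype.equivFinOfCardEq h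
  refine ⟨⟨fun s c => e (M'.step (e.symm s) c), e M'.start, e.symm ⁻¹' M'.accept⟩, ?_⟩
  have hev : ∀ (w : List α) (s : Q),
      DFA.evalFrom ⟨fun s c => e (M'.step (e.symm s) c), e M'.start, e.symm ⁻¹' M'.accept⟩
        (e s) w = e (M'.evalFrom s w) := by
    intro w
    induction w with
    | nil => intro s; rfl
    | cons c w ih =>
      intro s
      show DFA.evalFrom _ (e (M'.step (e.symm (e s)) c)) w = _
      rw [Equiv.symm_apply_apply]
      exact ih (M'.step s c)
  ext x
  rw [DFA.mem_accepts, DFA.mem_accepts]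
  show DFA.evalFrom _ (e M'.start) x ∈ _ ↔ _
  rw [hev x M'.start]
  show e.symm (e (M'.evalFrom M'.start x)) ∈ M'.accept ↔ _
  rw [Equiv.symm_apply_apply]
  rfl

end SCW

open scoped Computability

/-- The state complexity of a language: the least number of states of a DFA accepting it. -/
noncomputable def stateComplexity {α : Type*} (L : Language α) : ℕ :=
  sInf {k : ℕ | ∃ M : DFA α (Fin k), M.accepts = L}

/-- For `n ≥ 3`, the language `L_n` of the DFA over `{a,b}` (encoded as `Fin 2`:
`a = 0 : (1,…,n−1)` fixing `0`, `b = 1 : (0,1)`; initial state `0`; final state `n−1`)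
has `stateComplexity (L_n∗) = 2^(n−1) + 2^(n−2)`. -/
theorem star_complexity_of_witness (n : ℕ) (hn : 3 ≤ n) (M : DFA (Fin 2) (Fin n))
    (hstart : M.start = ⟨0, by omega⟩)
    (haccept : M.accept = {⟨n - 1, by omega⟩})
    (ha : ∀ q : Fin n,
      (M.step q 0).val = if q.val = 0 then 0 else if q.val = n - 1 then 1 else q.val + 1)
    (hb : ∀ q : Fin n,
      (M.step q 1).val = if q.val = 0 then 1 else if q.val = 1 then 0 else q.val) :
    stateComplexity (M.accepts∗) = 2 ^ (n - 1) + 2 ^ (n - 2) := by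
  obtain ⟨m, rfl⟩ : ∃ m, n = m + 3 := ⟨n - 3, by omega⟩
  have hs : M.start = (0 : Fin (m+3)) := by
    rw [hstart]
    exact Fin.ext (by rw [SCW.val_zero])
  have hacc : M.accept = {SCW.lst m} := by
    rw [haccept]
    rfl
  have hA : SCW.HA M := ha
  have hB : SCW.HB M := hb
  have hpow1 : m + 3 - 1 = m + 2 := rfl
  have hpow2 : m + 3 - 2 = m + 1 := rfl
  rw [hpow1, hpow2]
  unfold stateComplexity
  apply le_antisymm
  · apply Nat.sInf_le
    obtain ⟨D, hD⟩ := SCW.exists_dfa_fin (SCW.starDFA M) (2^(m+2) + 2^(m+1)) SCW.card_optV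
    exact ⟨D, hD.trans (SCW.accepts_starDFA M hs hacc)⟩
  · apply le_csInf
    · obtain ⟨D, hD⟩ := SCW.exists_dfa_fin (SCW.starDFA M) (2^(m+2) + 2^(m+1)) SCW.card_optV
      exact ⟨2^(m+2) + 2^(m+1), D, hD.trans (SCW.accepts_starDFA M hs hacc)⟩
    · rintro k' ⟨N, hN⟩
      exact SCW.lower_bound M hA hB hs hacc N hN
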